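/- Let E be a complex Banach space, take p,q with 1 < p ≤ q < ∞, and let (Ω,μ) be a measure space such that L^p(Ω) is infinite-dimensional. Let j : L^p(Ω) → L^p(Ω)'' denote the canonical embedding, which is an isometric isomorphism since L^p(Ω) is reflexive for 1 < p < ∞. Then for every n ∈ ℕ and Φ₁,…,Φₙ ∈ E'', sup{(Σᵢ₌₁ⁿ |Φᵢ(λᵢ)|^q)^{1/q} : (λ₁,…,λₙ) ∈ (E')ⁿ, μ_{p,n}(λ) ≤ 1} = sup{‖(j⁻¹(T''Φ₁),…,j⁻¹(T''Φₙ))‖ₙ^{[q]} : T ∈ B(E, L^p(Ω)), ‖T‖ ≤ 1}, where T'' : E'' → L^p(Ω)'' is the second adjoint of T. (The left-hand side is the (p,q)-multi-norm of (Φ₁,…,Φₙ) in E''.) -/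

import Mathlib

open MeasureTheory NormedSpace
open scoped ENNReal

variable {E : Type*} [NormedAddCommGroup E] [NormedSpace ℂ E]

/-- The weak `p`-summing norm `μ_{p,n}` of a tuple of functionals on `E`,
computed over the unit ball of `E`. -/
noncomputable def muPN (p : ℝ) {n : ℕ} (lam : Fin n → StrongDual ℂ E) : ℝ :=
  sSup {r : ℝ | ∃ x : E, ‖x‖ ≤ 1 ∧ r = (∑ i, ‖lam i x‖ ^ p) ^ (1 / p)}

/-- The standard `q`-multi-norm of a tuple in `L^p(Ω)`: the supremum over measurable
partitions `{X₁,…,Xₙ}` of `Ω` of `(Σᵢ ‖χ_{Xᵢ} gᵢ‖_p^q)^{1/q}`. -/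
noncomputable def stdQNorm {α : Type*} [MeasurableSpace α] (μ : Measure α)
    (pe : ℝ≥0∞) (q : ℝ) {n : ℕ} (g : Fin n → Lp ℂ pe μ) : ℝ :=
  sSup {r : ℝ | ∃ X : Fin n → Set α,
    (∀ i, MeasurableSet (X i)) ∧ Pairwise (Function.onFun Disjoint X) ∧
    (⋃ i, X i) = Set.univ ∧
    r = (∑ i, (eLpNorm (g i) pe (μ.restrict (X i))).toReal ^ q) ^ (1 / q)}

/-- The adjoint `T' : F' → E'` of a bounded operator `T : E → F`. -/
noncomputable def dualOp {F : Type*} [NormedAddCommGroup F] [NormedSpace ℂ F]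
    (T : E →L[ℂ] F) : StrongDual ℂ F →L[ℂ] StrongDual ℂ E :=
  (ContinuousLinearMap.compL ℂ E F ℂ).flip T

section Helpers

open Filter

/-- A linear map bounded by `1` on the unit ball has operator norm at most `1`. -/
theorem opNorm_le_one_of_unit {F G : Type*} [NormedAddCommGroup F] [NormedSpace ℂ F]
    [NormedAddCommGroup G] [NormedSpace ℂ G] (f : F →L[ℂ] G)
    (h : ∀ x : F, ‖x‖ ≤ 1 → ‖f x‖ ≤ 1) : ‖f‖ ≤ 1 := by
  refine f.opNorm_le_bound zero_le_one fun x => ?_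
  rcases eq_or_ne x 0 with rfl | hx
  · simp
  · have hnx : 0 < ‖x‖ := norm_pos_iff.2 hx
    have h1 : ‖f (((‖x‖⁻¹ : ℝ) : ℂ) • x)‖ ≤ 1 := by
      refine h _ ?_
      rw [norm_smul, Complex.norm_real, norm_inv, Real.norm_eq_abs, abs_of_pos hnx,
        inv_mul_cancel₀ hnx.ne']
    rw [_root_.map_smul, norm_smul, Complex.norm_real, norm_inv, Real.norm_eq_abs,
      abs_of_pos hnx] at h1
    calc ‖f x‖ = ‖x‖ * (‖x‖⁻¹ * ‖f x‖) := by field_simp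
      _ ≤ ‖x‖ * 1 := by
          exact mul_le_mul_of_nonneg_left h1 hnx.le
      _ = 1 * ‖x‖ := by ring

section Meas

variable {α : Type*} [MeasurableSpace α] {μ : Measure α} {pe : ℝ≥0∞}

theorem coeFn_finset_sum [Fact (1 ≤ pe)] {ι : Type*} (s : Finset ι) (f : ι → Lp ℂ pe μ) :
    ((∑ i ∈ s, f i : Lp ℂ pe μ) : α → ℂ) =ᵐ[μ] fun x => ∑ i ∈ s, (f i : α → ℂ) x := by
  induction s using Finset.cons_induction with
  | empty => simp only [Finset.sum_empty]; exact Lp.coeFn_zero ℂ pe μ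
  | cons a s ha ih =>
    rw [Finset.sum_cons]
    filter_upwards [Lp.coeFn_add (f a) (∑ i ∈ s, f i), ih] with x h1 h2
    rw [h1, Pi.add_apply, h2]
    simp [Finset.sum_cons]

/-- Multiplication by the indicator of `X`, as a linear map on `Lp`. -/
noncomputable def indLM (μ : Measure α) (pe : ℝ≥0∞) [Fact (1 ≤ pe)] {X : Set α}
    (hX : MeasurableSet X) : Lp ℂ pe μ →ₗ[ℂ] Lp ℂ pe μ where
  toFun f := MemLp.toLp (X.indicator f) ((Lp.memLp f).indicator hX)
  map_add' f g := by
    rw [← MemLp.toLp_add ((Lp.memLp f).indicator hX : MemLp (X.indicator f) pe μ)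
      ((Lp.memLp g).indicator hX : MemLp (X.indicator g) pe μ)]
    apply MemLp.toLp_congr
    filter_upwards [Lp.coeFn_add f g] with x hx
    by_cases hxX : x ∈ X
    · simp only [Pi.add_apply, Set.indicator_of_mem hxX, hx]
    · simp only [Pi.add_apply, Set.indicator_of_notMem hxX, add_zero]
  map_smul' c f := by
    simp only [RingHom.id_apply]
    rw [← MemLp.toLp_const_smul c ((Lp.memLp f).indicator hX : MemLp (X.indicator f) pe μ)]
    apply MemLp.toLp_congr
    filter_upwards [Lp.coeFn_smul c f] with x hx
    by_cases hxX : x ∈ X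
    · simp only [Pi.smul_apply, Set.indicator_of_mem hxX, hx]
    · simp only [Pi.smul_apply, Set.indicator_of_notMem hxX, smul_zero]

theorem indLM_norm [Fact (1 ≤ pe)] {X : Set α} (hX : MeasurableSet X) (f : Lp ℂ pe μ) :
    ‖indLM μ pe hX f‖ = (eLpNorm f pe (μ.restrict X)).toReal := by
  rw [indLM, LinearMap.coe_mk, AddHom.coe_mk,
    Lp.norm_toLp (X.indicator (f : α → ℂ)) ((Lp.memLp f).indicator hX),
    eLpNorm_indicator_eq_eLpNorm_restrict hX]

theorem indLM_norm_le [Fact (1 ≤ pe)] {X : Set α} (hX : MeasurableSet X) (f : Lp ℂ pe μ) :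
    ‖indLM μ pe hX f‖ ≤ ‖f‖ := by
  rw [indLM_norm hX f, Lp.norm_def]
  exact ENNReal.toReal_mono (Lp.eLpNorm_ne_top f)
    (eLpNorm_mono_measure _ Measure.restrict_le_self)

/-- Multiplication by the indicator of `X`, as a continuous linear map on `Lp`. -/
noncomputable def indCLM (μ : Measure α) (pe : ℝ≥0∞) [Fact (1 ≤ pe)] {X : Set α}
    (hX : MeasurableSet X) : Lp ℂ pe μ →L[ℂ] Lp ℂ pe μ :=
  LinearMap.mkContinuous (indLM μ pe hX) 1 fun f => by
    simpa using indLM_norm_le hX f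

theorem indCLM_norm [Fact (1 ≤ pe)] {X : Set α} (hX : MeasurableSet X) (f : Lp ℂ pe μ) :
    ‖indCLM μ pe hX f‖ = (eLpNorm f pe (μ.restrict X)).toReal := indLM_norm hX f

theorem sum_indicator_enorm_pow {n : ℕ} {X : Fin n → Set α}
    (hd : Pairwise (Function.onFun Disjoint X)) (b : Fin n → ℂ) {t : ℝ} (ht : 0 < t) (x : α) :
    (‖∑ i, (X i).indicator (fun _ => b i) x‖₊ : ℝ≥0∞) ^ t
      = ∑ i, (X i).indicator (fun _ => (‖b i‖₊ : ℝ≥0∞) ^ t) x := by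
  by_cases hj : ∃ j, x ∈ X j
  · obtain ⟨j, hj⟩ := hj
    have hnot : ∀ i, i ≠ j → x ∉ X i := fun i hij hxi =>
      Set.disjoint_left.1 (hd hij) hxi hj
    rw [Finset.sum_eq_single j (fun i _ hij => Set.indicator_of_notMem (hnot i hij) _)
        (fun h => absurd (Finset.mem_univ j) h),
      Finset.sum_eq_single j (fun i _ hij => Set.indicator_of_notMem (hnot i hij) _)
        (fun h => absurd (Finset.mem_univ j) h),
      Set.indicator_of_mem hj, Set.indicator_of_mem hj]
  · push_neg at hj
    simp only [Set.indicator_of_notMem (hj _), Finset.sum_const_zero, nnnorm_zero,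
      ENNReal.coe_zero, ENNReal.zero_rpow_of_pos ht]

theorem eLpNorm_sum_indicator (ν : Measure α) {n : ℕ} {X : Fin n → Set α}
    (hX : ∀ i, MeasurableSet (X i)) (hd : Pairwise (Function.onFun Disjoint X))
    (b : Fin n → ℂ) (hpe0 : pe ≠ 0) (hpet : pe ≠ ∞) :
    eLpNorm (fun x => ∑ i, (X i).indicator (fun _ => b i) x) pe ν
      = (∑ i, (‖b i‖₊ : ℝ≥0∞) ^ pe.toReal * ν (X i)) ^ (1 / pe.toReal) := by
  have hpt : 0 < pe.toReal := ENNReal.toReal_pos hpe0 hpet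
  rw [eLpNorm_eq_lintegral_rpow_enorm_toReal hpe0 hpet]
  simp only [enorm_eq_nnnorm]
  congr 1
  rw [lintegral_congr (fun x => sum_indicator_enorm_pow hd b hpt x),
    lintegral_finset_sum _ (fun i _ => (measurable_const.indicator (hX i)))]
  exact Finset.sum_congr rfl fun i _ => lintegral_indicator_const (hX i) _

theorem sum_eLpNorm_restrict_pow_le (f : α → ℂ) {n : ℕ} {X : Fin n → Set α}
    (hX : ∀ i, MeasurableSet (X i)) (hd : Pairwise (Function.onFun Disjoint X))
    (hpe0 : pe ≠ 0) (hpet : pe ≠ ∞) :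
    ∑ i, eLpNorm f pe (μ.restrict (X i)) ^ pe.toReal ≤ eLpNorm f pe μ ^ pe.toReal := by
  have hpt : 0 < pe.toReal := ENNReal.toReal_pos hpe0 hpet
  have hkey : ∀ ν : Measure α, eLpNorm f pe ν ^ pe.toReal
      = ∫⁻ x, (‖f x‖₊ : ℝ≥0∞) ^ pe.toReal ∂ν := fun ν => by
    rw [eLpNorm_eq_lintegral_rpow_enorm_toReal hpe0 hpet, ← ENNReal.rpow_mul,
      one_div_mul_cancel hpt.ne', ENNReal.rpow_one]
    rfl
  simp only [hkey]
  calc ∑ i, ∫⁻ x, (‖f x‖₊ : ℝ≥0∞) ^ pe.toReal ∂(μ.restrict (X i))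
      = ∫⁻ x, (‖f x‖₊ : ℝ≥0∞) ^ pe.toReal ∂(Measure.sum fun i => μ.restrict (X i)) := by
        rw [lintegral_sum_measure, tsum_fintype]
    _ = ∫⁻ x, (‖f x‖₊ : ℝ≥0∞) ^ pe.toReal ∂(μ.restrict (⋃ i, X i)) := by
        rw [Measure.restrict_iUnion hd hX]
    _ ≤ ∫⁻ x, (‖f x‖₊ : ℝ≥0∞) ^ pe.toReal ∂μ :=
        lintegral_mono' Measure.restrict_le_self le_rfl

/-- The canonical modification of a disjoint family into a partition of the whole space,
obtained by enlarging the `0`-th set. -/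
def extPartition {n : ℕ} (hn : 0 < n) (X : Fin n → Set α) : Fin n → Set α :=
  fun i => if i = (⟨0, hn⟩ : Fin n) then X i ∪ (⋃ j, X j)ᶜ else X i

theorem extPartition_measurable {n : ℕ} (hn : 0 < n) {X : Fin n → Set α}
    (hX : ∀ i, MeasurableSet (X i)) (i : Fin n) : MeasurableSet (extPartition hn X i) := by
  unfold extPartition
  split
  · exact (hX i).union (MeasurableSet.iUnion fun j => hX j).compl
  · exact hX i

theorem extPartition_subset {n : ℕ} (hn : 0 < n) (X : Fin n → Set α) (i : Fin n) :
    X i ⊆ extPartition hn X i := by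
  unfold extPartition
  split
  · exact Set.subset_union_left
  · exact le_rfl

theorem extPartition_disjoint {n : ℕ} (hn : 0 < n) {X : Fin n → Set α}
    (hd : Pairwise (Function.onFun Disjoint X)) {i k : Fin n} (hik : i ≠ k) :
    Disjoint (X i) (extPartition hn X k) := by
  unfold extPartition
  split
  · exact Set.disjoint_union_right.2 ⟨hd hik,
      (disjoint_compl_right.mono_left (Set.subset_iUnion X i))⟩
  · exact hd hik

theorem extPartition_pairwise {n : ℕ} (hn : 0 < n) {X : Fin n → Set α}
    (hd : Pairwise (Function.onFun Disjoint X)) :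
    Pairwise (Function.onFun Disjoint (extPartition hn X)) := by
  intro i j hij
  have h0 : ¬(i = (⟨0, hn⟩ : Fin n) ∧ j = (⟨0, hn⟩ : Fin n)) := by
    rintro ⟨rfl, rfl⟩; exact hij rfl
  unfold Function.onFun
  rcases eq_or_ne i (⟨0, hn⟩ : Fin n) with hi | hi
  · have hj : j ≠ (⟨0, hn⟩ : Fin n) := fun hj => h0 ⟨hi, hj⟩
    have := (extPartition_disjoint hn hd hij.symm : Disjoint (X j) (extPartition hn X i))
    have hj' : extPartition hn X j = X j := by unfold extPartition; simp [hj]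
    rw [hj']
    exact this.symm
  · have : extPartition hn X i = X i := by unfold extPartition; simp [hi]
    rw [this]
    exact extPartition_disjoint hn hd hij
theorem extPartition_iUnion {n : ℕ} (hn : 0 < n) (X : Fin n → Set α) :
    (⋃ i, extPartition hn X i) = Set.univ := by
  rw [Set.eq_univ_iff_forall]
  intro x
  by_cases hx : x ∈ ⋃ j, X j
  · obtain ⟨j, hj⟩ := Set.mem_iUnion.1 hx
    exact Set.mem_iUnion.2 ⟨j, extPartition_subset hn X j hj⟩
  · refine Set.mem_iUnion.2 ⟨⟨0, hn⟩, ?_⟩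
    unfold extPartition
    simp only [if_pos rfl]
    exact Set.mem_union_right _ hx

end Meas

end Helpers
section Helpers2

variable {p q : ℝ}

theorem muPN_bddAbove (hp0 : 0 < p) {n : ℕ} (lam : Fin n → StrongDual ℂ E) :
    BddAbove {r : ℝ | ∃ x : E, ‖x‖ ≤ 1 ∧ r = (∑ i, ‖lam i x‖ ^ p) ^ (1 / p)} := by
  refine ⟨(∑ i, ‖lam i‖ ^ p) ^ (1 / p), ?_⟩
  rintro r ⟨x, hx, rfl⟩
  refine Real.rpow_le_rpow (Finset.sum_nonneg fun i _ => Real.rpow_nonneg (norm_nonneg _) _)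
    (Finset.sum_le_sum fun i _ => Real.rpow_le_rpow (norm_nonneg _) ?_ hp0.le) (by positivity)
  exact le_trans ((lam i).le_opNorm x) (mul_le_of_le_one_right (norm_nonneg _) hx)

theorem le_muPN (hp0 : 0 < p) {n : ℕ} (lam : Fin n → StrongDual ℂ E) {x : E} (hx : ‖x‖ ≤ 1) :
    (∑ i, ‖lam i x‖ ^ p) ^ (1 / p) ≤ muPN p lam :=
  le_csSup (muPN_bddAbove hp0 lam) ⟨x, hx, rfl⟩

theorem norm_apply_le_of_muPN_le (hp0 : 0 < p) {n : ℕ} {lam : Fin n → StrongDual ℂ E}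
    (h : muPN p lam ≤ 1) (i : Fin n) {x : E} (hx : ‖x‖ ≤ 1) : ‖lam i x‖ ≤ 1 := by
  have h1 : ‖lam i x‖ ^ p ≤ ∑ j, ‖lam j x‖ ^ p :=
    Finset.single_le_sum (f := fun j => ‖lam j x‖ ^ p)
      (fun j _ => Real.rpow_nonneg (norm_nonneg _) _) (Finset.mem_univ i)
  have h2 : (‖lam i x‖ ^ p) ^ (1 / p) ≤ (∑ j, ‖lam j x‖ ^ p) ^ (1 / p) :=
    Real.rpow_le_rpow (Real.rpow_nonneg (norm_nonneg _) _) h1 (by positivity)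
  rw [← Real.rpow_mul (norm_nonneg _), mul_one_div_cancel hp0.ne', Real.rpow_one] at h2
  exact h2.trans (le_trans (le_muPN hp0 lam hx) h)

theorem norm_le_of_muPN_le (hp0 : 0 < p) {n : ℕ} {lam : Fin n → StrongDual ℂ E}
    (h : muPN p lam ≤ 1) (i : Fin n) : ‖lam i‖ ≤ 1 :=
  opNorm_le_one_of_unit (lam i) fun x hx => norm_apply_le_of_muPN_le hp0 h i hx

theorem muPN_zero (hp0 : 0 < p) (n : ℕ) : muPN p (fun _ : Fin n => (0 : StrongDual ℂ E)) = 0 := by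
  unfold muPN
  have : {r : ℝ | ∃ x : E, ‖x‖ ≤ 1 ∧
      r = (∑ _i : Fin n, ‖(0 : StrongDual ℂ E) x‖ ^ p) ^ (1 / p)} = {0} := by
    ext r
    simp only [Set.mem_setOf_eq, Set.mem_singleton_iff, ContinuousLinearMap.zero_apply,
      norm_zero, Real.zero_rpow hp0.ne', Finset.sum_const_zero,
      Real.zero_rpow (by positivity : (1:ℝ)/p ≠ 0)]
    exact ⟨fun ⟨x, _, hr⟩ => hr, fun hr => ⟨0, by simp, hr⟩⟩
  rw [this, csSup_singleton]

section StdQ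

variable {α : Type*} [MeasurableSpace α] {μ : Measure α} {pe : ℝ≥0∞} [Fact (1 ≤ pe)]

theorem stdQNorm_elt_le (hq0 : 0 < q) {n : ℕ} (g : Fin n → Lp ℂ pe μ)
    {r : ℝ} (hr : r ∈ {r : ℝ | ∃ X : Fin n → Set α,
      (∀ i, MeasurableSet (X i)) ∧ Pairwise (Function.onFun Disjoint X) ∧
      (⋃ i, X i) = Set.univ ∧
      r = (∑ i, (eLpNorm (g i) pe (μ.restrict (X i))).toReal ^ q) ^ (1 / q)}) :
    r ≤ (∑ i, ‖g i‖ ^ q) ^ (1 / q) := by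
  obtain ⟨X, hX, hd, hcov, rfl⟩ := hr
  refine Real.rpow_le_rpow (Finset.sum_nonneg fun i _ => Real.rpow_nonneg
    ENNReal.toReal_nonneg _) (Finset.sum_le_sum fun i _ => ?_) (by positivity)
  refine Real.rpow_le_rpow ENNReal.toReal_nonneg ?_ hq0.le
  rw [Lp.norm_def]
  exact ENNReal.toReal_mono (Lp.eLpNorm_ne_top (g i))
    (eLpNorm_mono_measure _ Measure.restrict_le_self)

theorem stdQNorm_set_bddAbove (hq0 : 0 < q) {n : ℕ} (g : Fin n → Lp ℂ pe μ) :
    BddAbove {r : ℝ | ∃ X : Fin n → Set α,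
      (∀ i, MeasurableSet (X i)) ∧ Pairwise (Function.onFun Disjoint X) ∧
      (⋃ i, X i) = Set.univ ∧
      r = (∑ i, (eLpNorm (g i) pe (μ.restrict (X i))).toReal ^ q) ^ (1 / q)} :=
  ⟨(∑ i, ‖g i‖ ^ q) ^ (1 / q), fun _ hr => stdQNorm_elt_le hq0 g hr⟩

theorem stdQNorm_le (hq0 : 0 < q) {n : ℕ} (g : Fin n → Lp ℂ pe μ) :
    stdQNorm μ pe q g ≤ (∑ i, ‖g i‖ ^ q) ^ (1 / q) :=
  Real.sSup_le (fun _ hr => stdQNorm_elt_le hq0 g hr) (by positivity)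

theorem stdQNorm_zero (hq0 : 0 < q) {n : ℕ} (hn : 0 < n) :
    stdQNorm μ pe q (fun _ : Fin n => (0 : Lp ℂ pe μ)) = 0 := by
  unfold stdQNorm
  have hz : ∀ s : Set α, eLpNorm ((0 : Lp ℂ pe μ) : α → ℂ) pe (μ.restrict s) = 0 := by
    intro s
    rw [eLpNorm_congr_ae (ae_restrict_of_ae (Lp.coeFn_zero ℂ pe μ))]
    exact eLpNorm_zero
  have hset : {r : ℝ | ∃ X : Fin n → Set α,
      (∀ i, MeasurableSet (X i)) ∧ Pairwise (Function.onFun Disjoint X) ∧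
      (⋃ i, X i) = Set.univ ∧
      r = (∑ i, (eLpNorm ((0 : Lp ℂ pe μ) : α → ℂ) pe (μ.restrict (X i))).toReal ^ q)
        ^ (1 / q)} = {0} := by
    ext r
    simp only [Set.mem_setOf_eq, Set.mem_singleton_iff]
    constructor
    · rintro ⟨X, hX, hd, hcov, rfl⟩
      simp only [hz, ENNReal.toReal_zero, Real.zero_rpow hq0.ne', Finset.sum_const_zero,
        Real.zero_rpow (by positivity : (1:ℝ)/q ≠ 0)]
    · rintro rfl
      refine ⟨extPartition hn (fun _ => (∅ : Set α)), extPartition_measurable hn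
        (fun _ => MeasurableSet.empty), extPartition_pairwise hn ?_,
        extPartition_iUnion hn _, ?_⟩
      · intro i j _; exact Set.disjoint_empty _
      · simp only [hz, ENNReal.toReal_zero, Real.zero_rpow hq0.ne', Finset.sum_const_zero,
          Real.zero_rpow (by positivity : (1:ℝ)/q ≠ 0)]
  rw [hset, csSup_singleton]

end StdQ

end Helpers2
set_option maxHeartbeats 2000000 in
/-- for a complex Banach space `E`, `1 < p ≤ q < ∞`, and a measure space
`(Ω,μ)` with `L^p(Ω)` infinite-dimensional, the `(p,q)`-multi-norm of a tuple
`(Φ₁,…,Φₙ)` in the bidual `E''` equals the supremum over `T ∈ B(E, L^p(Ω))_{[1]}` of the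
standard `q`-multi-norm of `(j⁻¹(T''Φ₁),…,j⁻¹(T''Φₙ))`, where `j` is the canonical
embedding of `L^p(Ω)` into its bidual (an isomorphism by reflexivity). -/
theorem bidual_pq_multinorm_via_standard_q_multinorm
    [CompleteSpace E]
    {α : Type*} [MeasurableSpace α] (μ : Measure α)
    (p q : ℝ) (hp : 1 < p) (hpq : p ≤ q) [Fact (1 ≤ ENNReal.ofReal p)]
    (hdim : ∀ m : ℕ, ∃ X : Fin m → Set α, (∀ i, MeasurableSet (X i)) ∧
      Pairwise (Function.onFun Disjoint X) ∧ ∀ i, 0 < μ (X i) ∧ μ (X i) < ∞)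
    (n : ℕ) (hn : 0 < n) (Φ : Fin n → StrongDual ℂ (StrongDual ℂ E)) :
    sSup {r : ℝ | ∃ lam : Fin n → StrongDual ℂ E, muPN p lam ≤ 1 ∧
        r = (∑ i, ‖Φ i (lam i)‖ ^ q) ^ (1 / q)}
      = sSup {r : ℝ | ∃ T : E →L[ℂ] Lp ℂ (ENNReal.ofReal p) μ, ‖T‖ ≤ 1 ∧
          ∃ g : Fin n → Lp ℂ (ENNReal.ofReal p) μ,
            (∀ i, inclusionInDoubleDual ℂ (Lp ℂ (ENNReal.ofReal p) μ) (g i)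
              = (Φ i).comp (dualOp T)) ∧
            r = stdQNorm μ (ENNReal.ofReal p) q g} := by
  have hp0 : 0 < p := lt_trans one_pos hp
  have hq0 : 0 < q := lt_of_lt_of_le hp0 hpq
  set pe := ENNReal.ofReal p with hpedef
  have hpe0 : pe ≠ 0 := by
    simp only [hpedef, ne_eq, ENNReal.ofReal_eq_zero, not_le]; exact hp0
  have hpet : pe ≠ ∞ := ENNReal.ofReal_ne_top
  have hptr : pe.toReal = p := ENNReal.toReal_ofReal hp0.le
  have h1q : (1 : ℝ) / q ≠ 0 := by positivity
  -- `dualOp` is composition on the right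
  have hdualOp_apply : ∀ (T : E →L[ℂ] Lp ℂ pe μ) (h : StrongDual ℂ (Lp ℂ pe μ)),
      dualOp T h = h.comp T := fun T h => by
    rw [dualOp, ContinuousLinearMap.flip_apply, ContinuousLinearMap.compL_apply]
  have hdT : ∀ T : E →L[ℂ] Lp ℂ pe μ, ‖T‖ ≤ 1 → ∀ h : StrongDual ℂ (Lp ℂ pe μ),
      ‖dualOp T h‖ ≤ ‖h‖ := by
    intro T hT h
    rw [hdualOp_apply]
    calc ‖h.comp T‖ ≤ ‖h‖ * ‖T‖ := ContinuousLinearMap.opNorm_comp_le h T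
      _ ≤ ‖h‖ * 1 := mul_le_mul_of_nonneg_left hT (norm_nonneg h)
      _ = ‖h‖ := mul_one _
  -- zero is in the left-hand set
  have hA0 : (0 : ℝ) ∈ {r : ℝ | ∃ lam : Fin n → StrongDual ℂ E, muPN p lam ≤ 1 ∧
      r = (∑ i, ‖Φ i (lam i)‖ ^ q) ^ (1 / q)} := by
    refine ⟨fun _ => 0, by rw [muPN_zero hp0 n]; exact zero_le_one, ?_⟩
    simp only [map_zero, norm_zero, Real.zero_rpow hq0.ne', Finset.sum_const_zero,
      Real.zero_rpow h1q]
  -- the left-hand set is bounded above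
  have hAbdd : BddAbove {r : ℝ | ∃ lam : Fin n → StrongDual ℂ E, muPN p lam ≤ 1 ∧
      r = (∑ i, ‖Φ i (lam i)‖ ^ q) ^ (1 / q)} := by
    refine ⟨(∑ i, ‖Φ i‖ ^ q) ^ (1 / q), ?_⟩
    rintro r ⟨lam, hlam, rfl⟩
    refine Real.rpow_le_rpow (Finset.sum_nonneg fun i _ => Real.rpow_nonneg (norm_nonneg _) _)
      (Finset.sum_le_sum fun i _ => Real.rpow_le_rpow (norm_nonneg _) ?_ hq0.le) (by positivity)
    exact le_trans ((Φ i).le_opNorm (lam i))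
      (mul_le_of_le_one_right (norm_nonneg _) (norm_le_of_muPN_le hp0 hlam i))
  -- zero is in the right-hand set
  have hB0 : (0 : ℝ) ∈ {r : ℝ | ∃ T : E →L[ℂ] Lp ℂ pe μ, ‖T‖ ≤ 1 ∧
      ∃ g : Fin n → Lp ℂ pe μ,
        (∀ i, inclusionInDoubleDual ℂ (Lp ℂ pe μ) (g i) = (Φ i).comp (dualOp T)) ∧
        r = stdQNorm μ pe q g} := by
    refine ⟨0, by simp, fun _ => 0, fun i => ?_, (stdQNorm_zero hq0 hn).symm⟩
    ext h
    rw [dual_def, ContinuousLinearMap.comp_apply, hdualOp_apply]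
    simp only [ContinuousLinearMap.zero_apply, ContinuousLinearMap.comp_zero, map_zero]
  -- the right-hand set is bounded above
  have hBbdd : BddAbove {r : ℝ | ∃ T : E →L[ℂ] Lp ℂ pe μ, ‖T‖ ≤ 1 ∧
      ∃ g : Fin n → Lp ℂ pe μ,
        (∀ i, inclusionInDoubleDual ℂ (Lp ℂ pe μ) (g i) = (Φ i).comp (dualOp T)) ∧
        r = stdQNorm μ pe q g} := by
    refine ⟨(∑ i, ‖Φ i‖ ^ q) ^ (1 / q), ?_⟩
    rintro r ⟨T, hT, g, hg, rfl⟩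
    have hgi : ∀ i, ‖g i‖ ≤ ‖Φ i‖ := by
      intro i
      refine norm_le_dual_bound ℂ (g i) (norm_nonneg (Φ i)) fun h => ?_
      have h1 : h (g i) = ((Φ i).comp (dualOp T)) h := by
        rw [← hg i, dual_def]
      rw [h1, ContinuousLinearMap.comp_apply]
      calc ‖Φ i (dualOp T h)‖ ≤ ‖Φ i‖ * ‖dualOp T h‖ := (Φ i).le_opNorm _
        _ ≤ ‖Φ i‖ * ‖h‖ := mul_le_mul_of_nonneg_left (hdT T hT h) (norm_nonneg (Φ i))
    refine le_trans (stdQNorm_le hq0 g) ?_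
    refine Real.rpow_le_rpow (Finset.sum_nonneg fun i _ => Real.rpow_nonneg (norm_nonneg _) _)
      (Finset.sum_le_sum fun i _ => Real.rpow_le_rpow (norm_nonneg _) (hgi i) hq0.le)
      (by positivity)
  refine le_antisymm (Real.sSup_le ?_ (le_csSup hBbdd hB0)) (Real.sSup_le ?_ (le_csSup hAbdd hA0))
  · -- left ≤ right
    rintro r ⟨lam, hlam, rfl⟩
    obtain ⟨X, hX, hd, hpos⟩ := hdim n
    have hmpos : ∀ i, 0 < (μ (X i)).toReal := fun i =>
      ENNReal.toReal_pos (hpos i).1.ne' (hpos i).2.ne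
    set a : Fin n → ℝ := fun i => (((μ (X i)).toReal) ^ (1 / p))⁻¹ with ha
    have hapos : ∀ i, 0 < a i := fun i => inv_pos.2 (Real.rpow_pos_of_pos (hmpos i) _)
    have hkey : ∀ i, (‖(a i : ℂ)‖₊ : ℝ≥0∞) ^ p * μ (X i) = 1 := by
      intro i
      have h1 : (‖(a i : ℂ)‖₊ : ℝ≥0∞) = ENNReal.ofReal (a i) := by
        rw [Complex.nnnorm_real]; exact Real.enorm_eq_ofReal (hapos i).le
      have h2 : (a i) ^ p = ((μ (X i)).toReal)⁻¹ := by
        rw [ha]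
        rw [Real.inv_rpow (Real.rpow_nonneg (hmpos i).le _),
          ← Real.rpow_mul (hmpos i).le, one_div_mul_cancel hp0.ne', Real.rpow_one]
      rw [h1, ENNReal.ofReal_rpow_of_pos (hapos i), h2,
        ENNReal.ofReal_inv_of_pos (hmpos i), ENNReal.ofReal_toReal (hpos i).2.ne,
        ENNReal.inv_mul_cancel (hpos i).1.ne' (hpos i).2.ne]
    set e : Fin n → Lp ℂ pe μ := fun i => indicatorConstLp pe (hX i) (hpos i).2.ne
      ((a i : ℂ)) with he
    -- coercion of linear combinations of the `e i`
    have hcoe : ∀ c : Fin n → ℂ, ((∑ i, c i • e i : Lp ℂ pe μ) : α → ℂ)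
        =ᵐ[μ] fun x => ∑ i, (X i).indicator (fun _ => c i * (a i : ℂ)) x := by
      intro c
      have h2 : ∀ᵐ x ∂μ, ∀ i : Fin n, ((c i • e i : Lp ℂ pe μ) : α → ℂ) x
          = (X i).indicator (fun _ => c i * (a i : ℂ)) x := by
        rw [ae_all_iff]
        intro i
        filter_upwards [Lp.coeFn_smul (c i) (e i),
          indicatorConstLp_coeFn (p := pe) (hs := hX i) (hμs := (hpos i).2.ne)
            (c := ((a i : ℂ)))] with x h1 h3
        rw [h1, Pi.smul_apply, h3]
        by_cases hxX : x ∈ X i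
        · simp only [Set.indicator_of_mem hxX, smul_eq_mul]
        · simp only [Set.indicator_of_notMem hxX, smul_zero]
      filter_upwards [coeFn_finset_sum Finset.univ (fun i => c i • e i), h2] with x h1 h2'
      rw [h1]
      exact Finset.sum_congr rfl fun i _ => h2' i
    -- the `Lp` norm of such combinations
    have hnorm : ∀ c : Fin n → ℂ, eLpNorm ((∑ i, c i • e i : Lp ℂ pe μ) : α → ℂ) pe μ
        = (∑ i, (‖c i‖₊ : ℝ≥0∞) ^ p) ^ (1 / p) := by
      intro c
      rw [eLpNorm_congr_ae (hcoe c), eLpNorm_sum_indicator μ hX hd _ hpe0 hpet, hptr]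
      congr 1
      refine Finset.sum_congr rfl fun i _ => ?_
      rw [nnnorm_mul, ENNReal.coe_mul, ENNReal.mul_rpow_of_nonneg _ _ hp0.le, mul_assoc,
        hkey i, mul_one]
    have hnormR : ∀ c : Fin n → ℂ, ‖(∑ i, c i • e i : Lp ℂ pe μ)‖
        = (∑ i, ‖c i‖ ^ p) ^ (1 / p) := by
      intro c
      rw [Lp.norm_def, hnorm c, ← ENNReal.toReal_rpow]
      congr 1
      rw [ENNReal.toReal_sum (fun i _ => ENNReal.rpow_ne_top_of_nonneg hp0.le
        ENNReal.coe_ne_top)]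
      refine Finset.sum_congr rfl fun i _ => ?_
      rw [← ENNReal.toReal_rpow, ENNReal.coe_toReal, coe_nnnorm]
    set T : E →L[ℂ] Lp ℂ pe μ := ∑ i, (lam i).smulRight (e i) with hT
    have hTx : ∀ x : E, T x = ∑ i, lam i x • e i := fun x => by
      rw [hT]
      simp only [ContinuousLinearMap.sum_apply, ContinuousLinearMap.smulRight_apply]
    have hT1 : ‖T‖ ≤ 1 := by
      refine opNorm_le_one_of_unit T fun x hx => ?_
      rw [hTx, hnormR]
      exact le_trans (le_muPN hp0 lam hx) hlam
    set g : Fin n → Lp ℂ pe μ := fun k => ∑ i, (Φ k (lam i)) • e i with hg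
    have hjeq : ∀ k, inclusionInDoubleDual ℂ (Lp ℂ pe μ) (g k) = (Φ k).comp (dualOp T) := by
      intro k
      ext h
      have hval1 : h (g k) = ∑ i, Φ k (lam i) * h (e i) := by
        rw [hg, map_sum]
        exact Finset.sum_congr rfl fun i _ => by rw [_root_.map_smul, smul_eq_mul]
      have hcompT : h.comp T = ∑ i, h (e i) • lam i := by
        ext x
        rw [ContinuousLinearMap.comp_apply, hTx, map_sum]
        simp only [ContinuousLinearMap.sum_apply, ContinuousLinearMap.smul_apply,
          _root_.map_smul, smul_eq_mul]
        exact Finset.sum_congr rfl fun i _ => mul_comm _ _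
      have hval2 : (Φ k) (h.comp T) = ∑ i, Φ k (lam i) * h (e i) := by
        rw [hcompT, map_sum]
        exact Finset.sum_congr rfl fun i _ => by rw [_root_.map_smul, smul_eq_mul, mul_comm]
      rw [dual_def, ContinuousLinearMap.comp_apply, hdualOp_apply, hval1, hval2]
    -- value of the standard norm on the extended partition
    have hval : ∀ k, (eLpNorm ((g k : Lp ℂ pe μ) : α → ℂ) pe
        (μ.restrict (extPartition hn X k))).toReal = ‖Φ k (lam k)‖ := by
      intro k
      rw [hg]
      rw [eLpNorm_congr_ae (ae_restrict_of_ae (hcoe (fun i => Φ k (lam i)))),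
        eLpNorm_sum_indicator (μ.restrict (extPartition hn X k)) hX hd _ hpe0 hpet, hptr]
      have hsum : ∑ i, (‖Φ k (lam i) * (a i : ℂ)‖₊ : ℝ≥0∞) ^ p
          * (μ.restrict (extPartition hn X k)) (X i) = (‖Φ k (lam k)‖₊ : ℝ≥0∞) ^ p := by
        rw [Finset.sum_eq_single k]
        · rw [Measure.restrict_apply (hX k),
            Set.inter_eq_self_of_subset_left (extPartition_subset hn X k),
            nnnorm_mul, ENNReal.coe_mul, ENNReal.mul_rpow_of_nonneg _ _ hp0.le, mul_assoc,
            hkey k, mul_one]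
        · intro i _ hik
          rw [Measure.restrict_apply (hX i),
            Set.disjoint_iff_inter_eq_empty.1 (extPartition_disjoint hn hd hik),
            measure_empty, mul_zero]
        · exact fun h => absurd (Finset.mem_univ k) h
      rw [hsum, ← ENNReal.rpow_mul, mul_one_div_cancel hp0.ne', ENNReal.rpow_one,
        ENNReal.coe_toReal, coe_nnnorm]
    have hrB : (∑ i, ‖Φ i (lam i)‖ ^ q) ^ (1 / q) ≤ stdQNorm μ pe q g := by
      refine le_csSup (stdQNorm_set_bddAbove hq0 g) ?_
      refine ⟨extPartition hn X, extPartition_measurable hn hX, extPartition_pairwise hn hd,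
        extPartition_iUnion hn X, ?_⟩
      congr 1
      exact Finset.sum_congr rfl fun i _ => by rw [hval i]
    exact le_trans hrB (le_csSup hBbdd ⟨T, hT1, g, hjeq, rfl⟩)
  · -- right ≤ left
    rintro r ⟨T, hT, g, hjeq, rfl⟩
    refine Real.sSup_le ?_ (le_csSup hAbdd hA0)
    rintro v ⟨X, hX, hd, hcov, rfl⟩
    choose ψ hψ1 hψ2 using fun i => exists_dual_vector'' ℂ (indCLM μ pe (hX i) (g i))
    set lam : Fin n → StrongDual ℂ E := fun i => ((ψ i).comp (indCLM μ pe (hX i))).comp T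
      with hlamdef
    have hbound : ∀ x : E, ‖x‖ ≤ 1 → ∑ i, ‖lam i x‖ ^ p ≤ 1 := by
      intro x hx
      have hTx1 : ‖T x‖ ≤ 1 :=
        le_trans (T.le_opNorm x) (mul_le_one₀ hT (norm_nonneg x) hx)
      have hstep : ∀ i, ‖lam i x‖
          ≤ (eLpNorm ((T x : Lp ℂ pe μ) : α → ℂ) pe (μ.restrict (X i))).toReal := by
        intro i
        have : lam i x = ψ i (indCLM μ pe (hX i) (T x)) := rfl
        rw [this, ← indCLM_norm (hX i) (T x)]
        calc ‖ψ i (indCLM μ pe (hX i) (T x))‖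
            ≤ ‖ψ i‖ * ‖indCLM μ pe (hX i) (T x)‖ := (ψ i).le_opNorm _
          _ ≤ 1 * ‖indCLM μ pe (hX i) (T x)‖ :=
              mul_le_mul_of_nonneg_right (hψ1 i) (norm_nonneg _)
          _ = ‖indCLM μ pe (hX i) (T x)‖ := one_mul _
      have h2 : ∑ i, ‖lam i x‖ ^ p
          ≤ ∑ i, (eLpNorm ((T x : Lp ℂ pe μ) : α → ℂ) pe (μ.restrict (X i))).toReal ^ p :=
        Finset.sum_le_sum fun i _ =>
          Real.rpow_le_rpow (norm_nonneg _) (hstep i) hp0.le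
      have h4 := sum_eLpNorm_restrict_pow_le (μ := μ) ((T x : Lp ℂ pe μ) : α → ℂ) hX hd hpe0 hpet
      rw [hptr] at h4
      have hne : ∀ i : Fin n,
          eLpNorm ((T x : Lp ℂ pe μ) : α → ℂ) pe (μ.restrict (X i)) ^ p ≠ ∞ :=
        fun i => ENNReal.rpow_ne_top_of_nonneg hp0.le
          (ne_top_of_le_ne_top (Lp.eLpNorm_ne_top (T x))
            (eLpNorm_mono_measure _ Measure.restrict_le_self))
      have h3 : ∑ i, (eLpNorm ((T x : Lp ℂ pe μ) : α → ℂ) pe (μ.restrict (X i))).toReal ^ p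
          ≤ ‖T x‖ ^ p := by
        calc ∑ i, (eLpNorm ((T x : Lp ℂ pe μ) : α → ℂ) pe (μ.restrict (X i))).toReal ^ p
            = (∑ i, eLpNorm ((T x : Lp ℂ pe μ) : α → ℂ) pe (μ.restrict (X i)) ^ p).toReal := by
              rw [ENNReal.toReal_sum (fun i _ => hne i)]
              exact Finset.sum_congr rfl fun i _ => ENNReal.toReal_rpow _ _
          _ ≤ ((eLpNorm ((T x : Lp ℂ pe μ) : α → ℂ) pe μ) ^ p).toReal :=
              ENNReal.toReal_mono
                (ENNReal.rpow_ne_top_of_nonneg hp0.le (Lp.eLpNorm_ne_top (T x))) h4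
          _ = ‖T x‖ ^ p := by rw [← ENNReal.toReal_rpow, ← Lp.norm_def]
      have h6 : ‖T x‖ ^ p ≤ 1 := Real.rpow_le_one (norm_nonneg _) hTx1 hp0.le
      linarith
    have hmu : muPN p lam ≤ 1 := by
      refine Real.sSup_le ?_ zero_le_one
      rintro s ⟨x, hx, rfl⟩
      exact Real.rpow_le_one
        (Finset.sum_nonneg fun i _ => Real.rpow_nonneg (norm_nonneg _) _)
        (hbound x hx) (by positivity)
    have hΦ : ∀ i, ‖Φ i (lam i)‖
        = (eLpNorm ((g i : Lp ℂ pe μ) : α → ℂ) pe (μ.restrict (X i))).toReal := by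
      intro i
      have h2 : Φ i (lam i)
          = ((Φ i).comp (dualOp T)) ((ψ i).comp (indCLM μ pe (hX i))) := by
        rw [ContinuousLinearMap.comp_apply, hdualOp_apply, hlamdef]
      rw [h2, ← hjeq i, dual_def, ContinuousLinearMap.comp_apply, hψ2 i,
        ← indCLM_norm (hX i) (g i), RCLike.norm_ofReal]
      exact abs_of_nonneg (norm_nonneg _)
    refine le_csSup hAbdd ⟨lam, hmu, ?_⟩
    congr 1
    exact Finset.sum_congr rfl fun i _ => by rw [hΦ i]
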